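/- Let V and W be vector spaces over ℂ, let ι be an index type, and let S : ι → (V →ₗ[ℂ] V) be a family of linear endomorphisms. If ψ ∈ V ⊗[ℂ] W satisfies (LinearMap.rTensor W (S i)) ψ = ψ for every i ∈ ι, then ψ lies in the range of LinearMap.rTensor W (Submodule.subtype K), where K = ⨅ i, ker(S i − id) is the common fixed subspace; that is, ψ belongs to the image of K ⊗[ℂ] W inside V ⊗[ℂ] W. -/

import Mathlib

open scoped TensorProduct

/-- a vector of `V ⊗ W` fixed by `S i ⊗ id` for every `i` lies in the image of
`K ⊗ W`, where `K = ⨅ i, ker (S i − id)` is the common fixed subspace of the `S i`. -/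
theorem fixed_vector_in_stabilized_subspace_tensor {V W : Type*}
    [AddCommGroup V] [Module ℂ V] [AddCommGroup W] [Module ℂ W]
    {ι : Type*} (S : ι → (V →ₗ[ℂ] V)) (ψ : V ⊗[ℂ] W)
    (h : ∀ i, LinearMap.rTensor W (S i) ψ = ψ) :
    ψ ∈ LinearMap.range
      (LinearMap.rTensor W
        (Submodule.subtype (⨅ i, LinearMap.ker (S i - LinearMap.id)))) := by
  classical
  set K := ⨅ i, LinearMap.ker (S i - LinearMap.id) with hK
  let b := Module.Basis.ofVectorSpace ℂ W
  let e : V ⊗[ℂ] W ≃ₗ[ℂ] (_ →₀ V) :=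
    (LinearEquiv.lTensor V b.repr).trans (TensorProduct.finsuppScalarRight ℂ ℂ V _)
  have nat : ∀ (f : V →ₗ[ℂ] V) (x : V ⊗[ℂ] W),
      e (LinearMap.rTensor W f x) = Finsupp.mapRange.linearMap f (e x) := by
    intro f x
    induction x using TensorProduct.induction_on with
    | zero => simp
    | tmul v w =>
      ext j
      simp [e, LinearEquiv.lTensor, map_smul]
    | add x y hx hy => simp [map_add, hx, hy]
  set g : _ →₀ V := e ψ with hg
  have hmem : ∀ j, g j ∈ K := by
    intro j
    rw [hK, Submodule.mem_iInf]
    intro i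
    have := congrArg e (h i)
    rw [nat] at this
    have hj := congrArg (fun x => x j) this
    simp only [Finsupp.mapRange.linearMap_apply, Finsupp.mapRange_apply] at hj
    simpa [LinearMap.mem_ker, LinearMap.sub_apply, sub_eq_zero] using hj
  have hψ : ψ = ∑ j ∈ g.support, (g j) ⊗ₜ[ℂ] (b j) := by
    have : ψ = e.symm g := by simp [hg]
    rw [this]
    conv_lhs => rw [← Finsupp.sum_single g, Finsupp.sum, map_sum]
    refine Finset.sum_congr rfl fun j _ => ?_
    simp [e, LinearEquiv.lTensor, Module.Basis.repr_symm_single_one]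
  rw [hψ]
  refine Submodule.sum_mem _ fun j _ => ?_
  exact ⟨⟨g j, hmem j⟩ ⊗ₜ[ℂ] (b j), rfl⟩
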